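/- Let $P(x) = \sum_{|\beta| \le d} a_\beta x^\beta$ be a polynomial on $\mathbb{R}^n$ of degree at most $d$, and let $0 < \varepsilon < 1/d$. Then there exists a constant $A_\varepsilon$ depending only on $\varepsilon$, $d$ and $n$ (not on the coefficients) such that $\int_{|x| \le 1} |P(x)|^{-\varepsilon}\, dx \le A_\varepsilon \big(\sum_{|\beta| \le d} |a_\beta|\big)^{-\varepsilon}$. -/

import Mathlib

open MeasureTheory

open Polynomial Set ENNReal

noncomputable def pl1 (p : ℝ[X]) : ℝ := ∑ k ∈ p.support, |p.coeff k|

lemma pl1_nonneg (p : ℝ[X]) : 0 ≤ pl1 p :=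
  Finset.sum_nonneg fun _ _ => abs_nonneg _

lemma pl1_eq_sum (p : ℝ[X]) {s : Finset ℕ} (hs : p.support ⊆ s) :
    pl1 p = ∑ k ∈ s, |p.coeff k| := by
  refine Finset.sum_subset hs fun k _ hk => ?_
  simp [Polynomial.notMem_support_iff.mp hk]

lemma abs_coeff_le_pl1 (p : ℝ[X]) (k : ℕ) : |p.coeff k| ≤ pl1 p := by
  by_cases h : k ∈ p.support
  · exact Finset.single_le_sum (f := fun k => |p.coeff k|) (fun _ _ => abs_nonneg _) h
  · simp [Polynomial.notMem_support_iff.mp h, pl1_nonneg]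

lemma pl1_linear_mul (a : ℝ) (q : ℝ[X]) :
    pl1 ((X - C a) * q) ≤ (1 + |a|) * pl1 q := by
  set N := q.natDegree + 1 with hN
  have hq : q.support ⊆ Finset.range (N + 1) := by
    intro k hk
    simp only [Finset.mem_range]
    have := Polynomial.le_natDegree_of_mem_supp k hk
    omega
  have hmul : ((X - C a) * q).support ⊆ Finset.range (N + 1) := by
    intro k hk
    have h1 := Polynomial.le_natDegree_of_mem_supp k hk
    have h2 : ((X - C a) * q).natDegree ≤ 1 + q.natDegree :=
      le_trans (Polynomial.natDegree_mul_le) (by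
        have : (X - C a).natDegree ≤ 1 := Polynomial.natDegree_X_sub_C_le a
        omega)
    simp only [Finset.mem_range]; omega
  rw [pl1_eq_sum _ hmul, pl1_eq_sum _ hq]
  have hco : ∀ k, ((X - C a) * q).coeff k
      = (X * q).coeff k - a * q.coeff k := by
    intro k
    rw [sub_mul, Polynomial.coeff_sub, Polynomial.coeff_C_mul]
  calc ∑ k ∈ Finset.range (N + 1), |((X - C a) * q).coeff k|
      ≤ ∑ k ∈ Finset.range (N + 1), (|(X * q).coeff k| + |a| * |q.coeff k|) := by
        refine Finset.sum_le_sum fun k _ => ?_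
        rw [hco k]
        exact (abs_sub _ _).trans (by rw [abs_mul])
    _ = (∑ k ∈ Finset.range (N + 1), |(X * q).coeff k|)
        + |a| * ∑ k ∈ Finset.range (N + 1), |q.coeff k| := by
        rw [Finset.sum_add_distrib, Finset.mul_sum]
    _ ≤ (∑ k ∈ Finset.range (N + 1), |q.coeff k|)
        + |a| * ∑ k ∈ Finset.range (N + 1), |q.coeff k| := by
        gcongr ?_ + _
        rw [Finset.sum_range_succ']
        simp only [Polynomial.coeff_X_mul]
        have h0 : (X * q).coeff 0 = 0 := by
          rw [Polynomial.mul_coeff_zero, Polynomial.coeff_X_zero, zero_mul]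
        rw [h0, abs_zero, add_zero]
        refine Finset.sum_le_sum_of_subset_of_nonneg ?_ (fun _ _ _ => abs_nonneg _)
        exact Finset.range_subset_range.mpr (by omega)
    _ = (1 + |a|) * ∑ k ∈ Finset.range (N + 1), |q.coeff k| := by ring

lemma pl1_prod_linear {ι : Type*} (t : Finset ι) (x : ι → ℝ) :
    pl1 (∏ j ∈ t, (X - C (x j))) ≤ ∏ j ∈ t, (1 + |x j|) := by
  classical
  induction t using Finset.induction_on with
  | empty =>
    have h1 : pl1 (1 : ℝ[X]) = 1 := by
      rw [pl1_eq_sum (s := {0}) _ (by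
        intro k hk
        rcases Polynomial.mem_support_iff.mp hk with h
        simp only [Finset.mem_singleton]
        by_contra hne
        exact h (by simp [Polynomial.coeff_one, hne]))]
      simp [Polynomial.coeff_one]
    simp [h1]
  | insert j t hj ih =>
    rw [Finset.prod_insert hj, Finset.prod_insert hj]
    calc pl1 ((X - C (x j)) * ∏ i ∈ t, (X - C (x i)))
        ≤ (1 + |x j|) * pl1 (∏ i ∈ t, (X - C (x i))) := pl1_linear_mul _ _
      _ ≤ (1 + |x j|) * ∏ i ∈ t, (1 + |x i|) := by
          have h1 : (0:ℝ) ≤ 1 + |x j| := by positivity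
          exact mul_le_mul_of_nonneg_left ih h1

lemma exists_sep_points (δ : ℝ) (hδ : 0 < δ) :
    ∀ (k : ℕ) (E : Set ℝ), IsClosed E → E ⊆ Icc (-1 : ℝ) 1 →
      (k * δ : ℝ) < (volume E).toReal →
      ∃ x : ℕ → ℝ, (∀ i ≤ k, x i ∈ E) ∧ (∀ i j, i < j → j ≤ k → x i + δ ≤ x j) := by
  intro k
  induction k with
  | zero =>
    intro E hE hE1 hvol
    have hne : E.Nonempty := by
      by_contra h
      rw [Set.not_nonempty_iff_eq_empty] at h
      simp [h] at hvol
    obtain ⟨e, he⟩ := hne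
    exact ⟨fun _ => e, fun _ _ => he, fun i j hij hj => by omega⟩
  | succ k ih =>
    intro E hE hE1 hvol
    have hfin : volume E ≠ ⊤ :=
      ne_top_of_le_ne_top (by rw [Real.volume_Icc]; exact ENNReal.ofReal_ne_top)
        (measure_mono hE1)
    have hvolpos : 0 < (volume E).toReal := by
      push_cast at hvol
      nlinarith [Nat.cast_nonneg (α := ℝ) k]
    have hne : E.Nonempty := by
      by_contra h
      rw [Set.not_nonempty_iff_eq_empty] at h
      simp [h] at hvolpos
    have hbdd : BddAbove E := BddAbove.mono hE1 (bddAbove_Icc)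
    set M := sSup E with hM
    have hME : M ∈ E := hE.csSup_mem hne hbdd
    set E' := E ∩ Iic (M - δ) with hE'
    have hE'c : IsClosed E' := hE.inter isClosed_Iic
    have hE'1 : E' ⊆ Icc (-1 : ℝ) 1 := fun y hy => hE1 hy.1
    have hcover : E ⊆ E' ∪ Ioc (M - δ) M := by
      intro e he
      rcases le_or_gt e (M - δ) with h | h
      · exact Or.inl ⟨he, h⟩
      · exact Or.inr ⟨h, le_csSup hbdd he⟩
    have hvol' : (k * δ : ℝ) < (volume E').toReal := by
      have h1 : volume E ≤ volume E' + volume (Ioc (M - δ) M) :=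
        le_trans (measure_mono hcover) (measure_union_le _ _)
      have h2 : volume (Ioc (M - δ) M) = ENNReal.ofReal δ := by
        rw [Real.volume_Ioc]; ring_nf
      have hfin' : volume E' ≠ ⊤ :=
        ne_top_of_le_ne_top hfin (measure_mono Set.inter_subset_left)
      have h3 : (volume E).toReal ≤ (volume E').toReal + δ := by
        rw [h2] at h1
        have := ENNReal.toReal_mono
          (ENNReal.add_ne_top.mpr ⟨hfin', ENNReal.ofReal_ne_top⟩) h1
        rw [ENNReal.toReal_add hfin' ENNReal.ofReal_ne_top,
          ENNReal.toReal_ofReal hδ.le] at this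
        exact this
      push_cast at hvol
      nlinarith
    obtain ⟨x', hx'1, hx'2⟩ := ih E' hE'c hE'1 hvol'
    refine ⟨fun i => if i = k + 1 then M else x' i, ?_, ?_⟩
    · intro i hi
      by_cases h : i = k + 1
      · simpa [h] using hME
      · have : i ≤ k := by omega
        simpa [h] using (hx'1 i this).1
    · intro i j hij hj
      by_cases h : j = k + 1
      · have hik : i ≤ k := by omega
        have h1 : x' i ≤ M - δ := (hx'1 i hik).2
        show (if i = k + 1 then M else x' i) + δ ≤ (if j = k + 1 then M else x' j)
        rw [if_neg (by omega), if_pos h]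
        linarith
      · have hjk : j ≤ k := by omega
        show (if i = k + 1 then M else x' i) + δ ≤ (if j = k + 1 then M else x' j)
        rw [if_neg (by omega), if_neg (by omega)]
        exact hx'2 i j hij hjk

lemma oneD (d : ℕ) (hd : 0 < d) (lam : ℝ) (hlam : 0 ≤ lam) (p : ℝ[X])
    (hdeg : p.degree < (d + 1 : ℕ)) (k : ℕ) :
    |p.coeff k| * (((volume {t ∈ Icc (-1 : ℝ) 1 | |p.eval t| ≤ lam}).toReal / (d + 2)) ^ d)
      ≤ ((d + 1) * 2 ^ d) * lam := by
  classical
  set E := {t ∈ Icc (-1 : ℝ) 1 | |p.eval t| ≤ lam} with hEdef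
  have hEc : IsClosed E := by
    have : E = Icc (-1 : ℝ) 1 ∩ (fun t => |p.eval t|) ⁻¹' Iic lam := by
      ext t; simp [hEdef, Set.mem_sep_iff]
    rw [this]
    exact isClosed_Icc.inter (IsClosed.preimage ((Polynomial.continuous p).abs) isClosed_Iic)
  have hE1 : E ⊆ Icc (-1 : ℝ) 1 := fun t ht => ht.1
  set m := (volume E).toReal with hm
  have hm0 : 0 ≤ m := ENNReal.toReal_nonneg
  rcases eq_or_lt_of_le hm0 with h0 | hmpos
  · rw [← h0]
    have : ((0:ℝ) / (d + 2)) ^ d = 0 := by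
      rw [zero_div, zero_pow hd.ne']
    rw [this, mul_zero]
    positivity
  set δ := m / (d + 2) with hδdef
  have hδ : 0 < δ := by positivity
  have hsep : (d * δ : ℝ) < m := by
    have hlt : (d : ℝ) / (d + 2) < 1 := by
      rw [div_lt_one (by positivity)]; linarith
    calc (d : ℝ) * δ = (d / (d+2)) * m := by rw [hδdef]; ring
      _ < 1 * m := by exact mul_lt_mul_of_pos_right hlt hmpos
      _ = m := one_mul m
  obtain ⟨x, hx1, hx2⟩ := exists_sep_points δ hδ d E hEc hE1 hsep
  -- the nodes
  set v : Fin (d + 1) → ℝ := fun i => x i with hv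
  have hmono : ∀ i j : Fin (d + 1), i < j → v i + δ ≤ v j := by
    intro i j hij
    exact hx2 i j hij (Nat.lt_succ_iff.mp j.isLt)
  have hvE : ∀ i, v i ∈ E := fun i => hx1 i (Nat.lt_succ_iff.mp i.isLt)
  have hsep' : ∀ i j : Fin (d + 1), i ≠ j → δ ≤ |v i - v j| := by
    intro i j hij
    rcases lt_or_gt_of_ne hij with h | h
    · rw [abs_sub_comm, abs_of_nonneg (by linarith [hmono i j h])]
      linarith [hmono i j h]
    · rw [abs_of_nonneg (by linarith [hmono j i h])]
      linarith [hmono j i h]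
  have hinj : Set.InjOn v (Finset.univ : Finset (Fin (d+1))) := by
    intro i _ j _ hij
    by_contra hne
    have := hsep' i j hne
    rw [hij, sub_self, abs_zero] at this
    linarith
  have hcard : (Finset.univ : Finset (Fin (d+1))).card = d + 1 := by simp
  have hinterp : Lagrange.interpolate Finset.univ v (fun i => p.eval (v i)) = p :=
    (Lagrange.eq_interpolate hinj (by rw [hcard]; exact_mod_cast hdeg)).symm
  -- coefficient of basis
  have hbasis : ∀ i : Fin (d + 1),
      |(Lagrange.basis Finset.univ v i).coeff k| ≤ 2 ^ d / δ ^ d := by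
    intro i
    have hb : Lagrange.basis Finset.univ v i
        = C (∏ j ∈ Finset.univ.erase i, (v i - v j)⁻¹)
          * ∏ j ∈ Finset.univ.erase i, (X - C (v j)) := by
      rw [Lagrange.basis]
      rw [map_prod, ← Finset.prod_mul_distrib]
      rfl
    rw [hb, Polynomial.coeff_C_mul, abs_mul]
    have hcarde : (Finset.univ.erase i).card = d := by
      rw [Finset.card_erase_of_mem (Finset.mem_univ i), hcard]
      omega
    have h1 : |∏ j ∈ Finset.univ.erase i, (v i - v j)⁻¹| ≤ (δ ^ d)⁻¹ := by
      rw [Finset.abs_prod]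
      have : ∀ j ∈ Finset.univ.erase i, |(v i - v j)⁻¹| ≤ δ⁻¹ := by
        intro j hj
        rw [abs_inv]
        exact inv_anti₀ hδ (hsep' i j (fun h => (Finset.mem_erase.mp hj).1 h.symm))
      calc ∏ j ∈ Finset.univ.erase i, |(v i - v j)⁻¹|
          ≤ ∏ j ∈ Finset.univ.erase i, δ⁻¹ :=
            Finset.prod_le_prod (fun _ _ => abs_nonneg _) this
        _ = (δ⁻¹) ^ d := by rw [Finset.prod_const, hcarde]
        _ = (δ ^ d)⁻¹ := by rw [inv_pow]
    have h2 : |(∏ j ∈ Finset.univ.erase i, (X - C (v j))).coeff k| ≤ 2 ^ d := by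
      refine le_trans (abs_coeff_le_pl1 _ k) (le_trans (pl1_prod_linear _ _) ?_)
      calc ∏ j ∈ Finset.univ.erase i, (1 + |v j|)
          ≤ ∏ j ∈ Finset.univ.erase i, 2 := by
            refine Finset.prod_le_prod (fun _ _ => by positivity) (fun j _ => ?_)
            have := hE1 (hvE j)
            have h := abs_le.mpr ⟨this.1, this.2⟩
            linarith
        _ = 2 ^ d := by rw [Finset.prod_const, hcarde]
    calc |∏ j ∈ Finset.univ.erase i, (v i - v j)⁻¹|
          * |(∏ j ∈ Finset.univ.erase i, (X - C (v j))).coeff k|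
        ≤ (δ ^ d)⁻¹ * 2 ^ d := by
          exact mul_le_mul h1 h2 (abs_nonneg _) (by positivity)
      _ = 2 ^ d / δ ^ d := by ring
  have hcoeff : |p.coeff k| ≤ (d + 1) * (lam * (2 ^ d / δ ^ d)) := by
    conv_lhs => rw [← hinterp]
    rw [Lagrange.interpolate_apply]
    rw [Polynomial.finset_sum_coeff]
    refine le_trans (Finset.abs_sum_le_sum_abs _ _) ?_
    have : ∀ i ∈ (Finset.univ : Finset (Fin (d+1))),
        |(C (p.eval (v i)) * Lagrange.basis Finset.univ v i).coeff k|
          ≤ lam * (2 ^ d / δ ^ d) := by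
      intro i _
      rw [Polynomial.coeff_C_mul, abs_mul]
      have heval : |p.eval (v i)| ≤ lam := (hvE i).2
      exact mul_le_mul heval (hbasis i) (abs_nonneg _) hlam
    refine le_trans (Finset.sum_le_sum this) ?_
    rw [Finset.sum_const, hcard]
    simp [nsmul_eq_mul]
  have hδd : (0:ℝ) < δ ^ d := by positivity
  have := mul_le_mul_of_nonneg_right hcoeff hδd.le
  calc |p.coeff k| * δ ^ d ≤ ((d + 1) * (lam * (2 ^ d / δ ^ d))) * δ ^ d := this
    _ = ((d + 1) * 2 ^ d) * lam * (δ ^ d / δ ^ d) := by ring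
    _ = ((d + 1) * 2 ^ d) * lam := by rw [div_self hδd.ne', mul_one]

lemma pow_rpow_comm (x : ℝ) (hx : 0 ≤ x) (k : ℕ) (y : ℝ) :
    (x ^ k) ^ y = (x ^ y) ^ k := by
  rw [← Real.rpow_natCast x k, ← Real.rpow_mul hx, mul_comm, Real.rpow_mul hx,
    Real.rpow_natCast]

lemma tsum_ofReal_geom {c r : ℝ} (hc : 0 ≤ c) (hr0 : 0 ≤ r) (hr : r < 1) :
    ∑' k : ℕ, ENNReal.ofReal (c * r ^ k) = ENNReal.ofReal (c * (1 - r)⁻¹) := by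
  have h1 : ∀ k : ℕ, ENNReal.ofReal (c * r ^ k)
      = ENNReal.ofReal c * (ENNReal.ofReal r) ^ k := by
    intro k
    rw [ENNReal.ofReal_mul hc, ENNReal.ofReal_pow hr0]
  simp_rw [h1]
  rw [ENNReal.tsum_mul_left, ENNReal.tsum_geometric]
  have h2 : (1 : ℝ≥0∞) - ENNReal.ofReal r = ENNReal.ofReal (1 - r) := by
    rw [ENNReal.ofReal_sub _ hr0, ENNReal.ofReal_one]
  rw [h2, ← ENNReal.ofReal_inv_of_pos (by linarith), ← ENNReal.ofReal_mul hc]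

lemma cons_mem_ball {n : ℕ} (t : ℝ) (y : Fin n → ℝ) :
    Fin.cons t y ∈ Metric.closedBall (0 : Fin (n+1) → ℝ) 1 ↔
      (t ∈ Icc (-1 : ℝ) 1 ∧ y ∈ Metric.closedBall (0 : Fin n → ℝ) 1) := by
  simp only [mem_closedBall_zero_iff]
  rw [pi_norm_le_iff_of_nonneg zero_le_one, pi_norm_le_iff_of_nonneg zero_le_one,
    Fin.forall_fin_succ]
  simp only [Fin.cons_zero, Fin.cons_succ, Real.norm_eq_abs]
  rw [abs_le]
  constructor
  · rintro ⟨h1, h2⟩; exact ⟨⟨h1.1, h1.2⟩, h2⟩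
  · rintro ⟨h1, h2⟩; exact ⟨⟨h1.1, h1.2⟩, h2⟩

lemma slice_piece {α : Type*} [MeasureSpace α] [SigmaFinite (volume : Measure α)]
    {T : Set (ℝ × α)} (hT : MeasurableSet T) {W : Set α} (hW : MeasurableSet W)
    {κ : ℝ≥0∞} (h : ∀ y ∈ W, volume {t : ℝ | (t, y) ∈ T} ≤ κ) :
    volume (T ∩ univ ×ˢ W) ≤ κ * volume W := by
  rw [Measure.volume_eq_prod,
    Measure.prod_apply_symm (hT.inter (MeasurableSet.univ.prod hW))]
  have hb : ∀ y : α, volume ((fun x => (x, y)) ⁻¹' (T ∩ univ ×ˢ W))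
      ≤ W.indicator (fun _ => κ) y := by
    intro y
    by_cases hy : y ∈ W
    · rw [indicator_of_mem hy]
      refine le_trans (measure_mono ?_) (h y hy)
      intro t ht
      exact ht.1
    · rw [indicator_of_notMem hy]
      have : (fun x => (x, y)) ⁻¹' (T ∩ univ ×ˢ W) = ∅ := by
        ext t
        simp only [mem_preimage, mem_inter_iff, mem_prod, mem_empty_iff_false, iff_false]
        rintro ⟨-, -, h2⟩
        exact hy h2
      simp [this]
  refine le_trans (lintegral_mono hb) ?_
  rw [lintegral_indicator_const hW]

lemma sublevel_ball (d : ℕ) (hd : 0 < d) (θ : ℝ) (hθ0 : 0 < θ) (hθ : (d : ℝ) * θ < 1) :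
    ∀ n : ℕ, ∃ C : ℝ, 0 < C ∧ ∀ P : MvPolynomial (Fin n) ℝ, P.totalDegree ≤ d →
      ∀ β : Fin n →₀ ℕ, 1 ≤ |MvPolynomial.coeff β P| → ∀ lam : ℝ, 0 < lam →
      volume {x ∈ Metric.closedBall (0 : Fin n → ℝ) 1 | |MvPolynomial.eval x P| ≤ lam}
        ≤ ENNReal.ofReal (C * lam ^ θ) := by
  have hdpos : (0:ℝ) < (d:ℝ) := Nat.cast_pos.mpr hd
  intro n
  induction n with
  | zero =>
    refine ⟨1, one_pos, ?_⟩
    intro P hPd β hβ lam hlam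
    obtain ⟨r, rfl⟩ := MvPolynomial.C_surjective (Fin 0) P
    have hβ0 : β = 0 := Subsingleton.elim _ _
    rw [hβ0] at hβ
    have hr : 1 ≤ |r| := by
      rwa [MvPolynomial.coeff_zero_C] at hβ
    rcases lt_or_ge lam 1 with hl | hl
    · have hempty : {x ∈ Metric.closedBall (0 : Fin 0 → ℝ) 1 |
          |MvPolynomial.eval x (MvPolynomial.C r)| ≤ lam} = ∅ := by
        ext x
        simp only [MvPolynomial.eval_C, mem_empty_iff_false, iff_false, mem_sep_iff]
        rintro ⟨-, h2⟩
        linarith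
      rw [hempty]
      simp
    · calc volume {x ∈ Metric.closedBall (0 : Fin 0 → ℝ) 1 |
            |MvPolynomial.eval x (MvPolynomial.C r)| ≤ lam}
          ≤ volume (univ : Set (Fin 0 → ℝ)) := measure_mono (subset_univ _)
        _ = 1 := by
            rw [MeasureTheory.volume_pi, Measure.pi_univ]
            simp
        _ ≤ ENNReal.ofReal (1 * lam ^ θ) := by
            rw [one_mul, ← ENNReal.ofReal_one]
            exact ENNReal.ofReal_le_ofReal (Real.one_le_rpow hl hθ0.le)
  | succ n ih =>
    obtain ⟨Cn, hCn, hIH⟩ := ih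
    set K : ℝ := ((d : ℝ) + 1) * 2 ^ d with hK
    have hK0 : (0:ℝ) < K := by positivity
    set r₁ : ℝ := (2 : ℝ) ^ (θ - (d : ℝ)⁻¹) with hr₁
    set r₂ : ℝ := ((1 : ℝ) / 2) ^ θ with hr₂
    have hr₁0 : 0 ≤ r₁ := Real.rpow_nonneg (by norm_num) _
    have hθd : θ < (d : ℝ)⁻¹ := by
      rw [← one_div, lt_div_iff₀ hdpos]
      linarith [hθ]
    have hr₁1 : r₁ < 1 :=
      Real.rpow_lt_one_of_one_lt_of_neg one_lt_two (by linarith)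
    have hr₂0 : 0 ≤ r₂ := Real.rpow_nonneg (by norm_num) _
    have hr₂1 : r₂ < 1 := Real.rpow_lt_one (by norm_num) (by norm_num) hθ0
    have h1r₁ : (0:ℝ) < 1 - r₁ := by linarith
    have h1r₂ : (0:ℝ) < 1 - r₂ := by linarith
    set G₁ : ℝ := ((d : ℝ) + 2) * K ^ ((d : ℝ)⁻¹) * (Cn * 2 ^ θ) with hG₁
    have hG₁0 : (0:ℝ) < G₁ := by
      have : (0:ℝ) < K ^ ((d : ℝ)⁻¹) := Real.rpow_pos_of_pos hK0 _
      have h2θ : (0:ℝ) < (2:ℝ) ^ θ := Real.rpow_pos_of_pos (by norm_num) _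
      positivity
    set Cfin : ℝ := G₁ * (1 - r₁)⁻¹ + 2 * Cn * (1 - r₂)⁻¹ with hCfin
    have hCfin0 : 0 < Cfin := by
      have h1 : (0:ℝ) < (1 - r₁)⁻¹ := inv_pos.mpr h1r₁
      have h2 : (0:ℝ) < (1 - r₂)⁻¹ := inv_pos.mpr h1r₂
      positivity
    refine ⟨Cfin, hCfin0, ?_⟩
    intro P hPd β hβ lam hlam
    set Q := MvPolynomial.finSuccEquiv ℝ n P with hQ
    set i₀ := β 0 with hi₀
    set c := Q.coeff i₀ with hc
    have hcβ : MvPolynomial.coeff (Finsupp.tail β) c = MvPolynomial.coeff β P := by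
      rw [hc, hQ, MvPolynomial.finSuccEquiv_coeff_coeff, Finsupp.cons_tail]
    have hcβ1 : 1 ≤ |MvPolynomial.coeff (Finsupp.tail β) c| := by rw [hcβ]; exact hβ
    have hcd : c.totalDegree ≤ d := by
      rw [MvPolynomial.totalDegree]
      refine Finset.sup_le ?_
      intro m hm
      have h1 : Finsupp.cons i₀ m ∈ P.support :=
        MvPolynomial.mem_support_coeff_finSuccEquiv.mp hm
      have h2 := MvPolynomial.le_totalDegree h1
      have h3 : (m.sum fun _ e => e) ≤ ((Finsupp.cons i₀ m).sum fun _ e => e) := by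
        rw [Finsupp.sum_cons]
        exact le_add_self
      exact le_trans h3 (le_trans h2 hPd)
    have hcont : Continuous fun y : Fin n → ℝ => |MvPolynomial.eval y c| :=
      (MvPolynomial.continuous_eval (p := c)).abs
    set cube := Metric.closedBall (0 : Fin n → ℝ) 1 with hcube
    have hcubeMeas : MeasurableSet cube := Metric.isClosed_closedBall.measurableSet
    set S := {x ∈ Metric.closedBall (0 : Fin (n+1) → ℝ) 1 |
      |MvPolynomial.eval x P| ≤ lam} with hS
    have hSmeas : MeasurableSet S := by
      have : S = Metric.closedBall (0 : Fin (n+1) → ℝ) 1 ∩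
          (fun x => |MvPolynomial.eval x P|) ⁻¹' Iic lam := rfl
      rw [this]
      exact Metric.isClosed_closedBall.measurableSet.inter
        (((MvPolynomial.continuous_eval (p := P)).abs).measurable measurableSet_Iic)
    set e := MeasurableEquiv.piFinSuccAbove (fun _ : Fin (n+1) => ℝ) 0 with he
    set T := e.symm ⁻¹' S with hT
    have hTmeas : MeasurableSet T := e.symm.measurable hSmeas
    have hmp := MeasurePreserving.symm _
      (MeasureTheory.volume_preserving_piFinSuccAbove (fun _ : Fin (n+1) => ℝ) 0)
    have hvolS : volume S = volume T :=
      (hmp.measure_preimage hSmeas.nullMeasurableSet).symm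
    have hmemT : ∀ (t : ℝ) (y : Fin n → ℝ), (t, y) ∈ T ↔
        ((t ∈ Icc (-1:ℝ) 1 ∧ y ∈ cube) ∧
          |(Q.map (MvPolynomial.eval y)).eval t| ≤ lam) := by
      intro t y
      have hsymm : e.symm (t, y) = Fin.cons t y := by
        show Fin.insertNthEquiv (fun _ : Fin (n+1) => ℝ) 0 (t, y) = Fin.cons t y
        simp [Fin.insertNthEquiv]
      have : (t, y) ∈ T ↔ Fin.cons t y ∈ S := by rw [hT, mem_preimage, hsymm]
      rw [this, hS, mem_sep_iff, cons_mem_ball,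
        MvPolynomial.eval_eq_eval_mv_eval', ← hQ]
    have hsliceIcc : ∀ y, {t : ℝ | (t, y) ∈ T} ⊆ Icc (-1:ℝ) 1 := by
      intro y t ht
      exact ((hmemT t y).mp ht).1.1
    have hslice2 : ∀ y, volume {t : ℝ | (t, y) ∈ T} ≤ ENNReal.ofReal 2 := by
      intro y
      refine le_trans (measure_mono (hsliceIcc y)) ?_
      rw [Real.volume_Icc]
      norm_num
    have hsliceEq : ∀ y ∈ cube, {t : ℝ | (t, y) ∈ T}
        = {t ∈ Icc (-1:ℝ) 1 | |(Q.map (MvPolynomial.eval y)).eval t| ≤ lam} := by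
      intro y hy
      ext t
      rw [mem_setOf_eq, hmemT t y, mem_sep_iff]
      tauto
    have hdegy : ∀ y : Fin n → ℝ,
        (Q.map (MvPolynomial.eval y)).degree < ((d + 1 : ℕ) : WithBot ℕ) := by
      intro y
      have h1 : (Q.map (MvPolynomial.eval y)).natDegree ≤ Q.natDegree :=
        Polynomial.natDegree_map_le
      have h2 : Q.natDegree ≤ d := by
        rw [hQ, MvPolynomial.natDegree_finSuccEquiv]
        exact le_trans (MvPolynomial.degreeOf_le_totalDegree P 0) hPd
      have h3 : (Q.map (MvPolynomial.eval y)).natDegree < d + 1 := by omega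
      exact lt_of_le_of_lt Polynomial.degree_le_natDegree (by exact_mod_cast h3)
    have hsliceBound : ∀ (μ : ℝ), 0 < μ → ∀ y ∈ cube,
        μ ≤ |MvPolynomial.eval y c| →
        volume {t : ℝ | (t, y) ∈ T}
          ≤ ENNReal.ofReal (((d:ℝ) + 2) * (K * lam / μ) ^ ((d:ℝ)⁻¹)) := by
      intro μ hμ y hy hcy
      rw [hsliceEq y hy]
      set E := {t ∈ Icc (-1:ℝ) 1 | |(Q.map (MvPolynomial.eval y)).eval t| ≤ lam}
        with hE
      have hEfin : volume E ≠ ⊤ :=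
        ne_top_of_le_ne_top (by rw [Real.volume_Icc]; exact ENNReal.ofReal_ne_top)
          (measure_mono (fun t ht => ht.1))
      have h1 := oneD d hd lam hlam.le (Q.map (MvPolynomial.eval y)) (hdegy y) i₀
      have h2 : (Q.map (MvPolynomial.eval y)).coeff i₀ = MvPolynomial.eval y c := by
        rw [Polynomial.coeff_map, hc]
      rw [h2, ← hE] at h1
      set m := (volume E).toReal with hm
      have hm0 : 0 ≤ m := ENNReal.toReal_nonneg
      have h3 : μ * ((m / ((d:ℝ)+2)) ^ d) ≤ K * lam := by
        refine le_trans (mul_le_mul_of_nonneg_right hcy (by positivity)) h1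
      have h4 : (m / ((d:ℝ)+2)) ^ d ≤ K * lam / μ := by
        rw [le_div_iff₀ hμ]
        calc (m / ((d:ℝ)+2)) ^ d * μ = μ * ((m / ((d:ℝ)+2)) ^ d) := by ring
          _ ≤ K * lam := h3
      have h5 : m / ((d:ℝ)+2) ≤ (K * lam / μ) ^ ((d:ℝ)⁻¹) := by
        calc m / ((d:ℝ)+2) = ((m / ((d:ℝ)+2)) ^ d) ^ ((d:ℝ)⁻¹) :=
              (Real.pow_rpow_inv_natCast (by positivity) hd.ne').symm
          _ ≤ (K * lam / μ) ^ ((d:ℝ)⁻¹) :=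
              Real.rpow_le_rpow (by positivity) h4 (by positivity)
      have h6 : m ≤ ((d:ℝ)+2) * (K * lam / μ) ^ ((d:ℝ)⁻¹) := by
        rw [div_le_iff₀ (by positivity)] at h5
        linarith [h5]
      calc volume E = ENNReal.ofReal m := (ENNReal.ofReal_toReal hEfin).symm
        _ ≤ _ := ENNReal.ofReal_le_ofReal h6
    -- decomposition of the y-space
    set Z := {y ∈ cube | MvPolynomial.eval y c = 0} with hZ
    set A : ℕ → Set (Fin n → ℝ) := fun k =>
      {y ∈ cube | 2 ^ k * lam ≤ |MvPolynomial.eval y c| ∧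
        |MvPolynomial.eval y c| ≤ 2 ^ (k+1) * lam} with hA
    set B : ℕ → Set (Fin n → ℝ) := fun k =>
      {y ∈ cube | |MvPolynomial.eval y c| ≤ (1/2 : ℝ) ^ k * lam} with hB
    have hZmeas : MeasurableSet Z :=
      hcubeMeas.inter ((MvPolynomial.continuous_eval (p := c)).measurable
        (measurableSet_singleton 0))
    have hAmeas : ∀ k, MeasurableSet (A k) := by
      intro k
      exact hcubeMeas.inter ((hcont.measurable measurableSet_Ici).inter
        (hcont.measurable measurableSet_Iic))
    have hBmeas : ∀ k, MeasurableSet (B k) := fun k =>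
      hcubeMeas.inter (hcont.measurable measurableSet_Iic)
    have hcover : T ⊆ (univ ×ˢ Z) ∪ ((⋃ k, univ ×ˢ A k) ∪ (⋃ k, univ ×ˢ B k)) := by
      rintro ⟨t, y⟩ ht
      have hy : y ∈ cube := ((hmemT t y).mp ht).1.2
      rcases eq_or_lt_of_le (abs_nonneg (MvPolynomial.eval y c)) with h0 | h0
      · left
        exact ⟨mem_univ t, hy, abs_eq_zero.mp h0.symm⟩
      · right
        rcases le_or_gt lam |MvPolynomial.eval y c| with hge | hlt
        · left
          have h1 : 1 ≤ |MvPolynomial.eval y c| / lam := (one_le_div hlam).mpr hge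
          obtain ⟨k, hk1, hk2⟩ := exists_nat_pow_near h1 one_lt_two
          refine mem_iUnion.mpr ⟨k, mem_univ t, hy, ?_, ?_⟩
          · rw [← le_div_iff₀ hlam]
            exact hk1
          · exact ((div_lt_iff₀ hlam).mp hk2).le
        · right
          have hrpos : 0 < |MvPolynomial.eval y c| := h0
          have h1 : 1 ≤ lam / |MvPolynomial.eval y c| :=
            (one_le_div hrpos).mpr hlt.le
          obtain ⟨k, hk1, hk2⟩ := exists_nat_pow_near h1 one_lt_two
          refine mem_iUnion.mpr ⟨k, mem_univ t, hy, ?_⟩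
          have h2 : (2:ℝ) ^ k * |MvPolynomial.eval y c| ≤ lam :=
            (le_div_iff₀ hrpos).mp hk1
          have h3 : (1/2:ℝ) ^ k * lam = lam / 2 ^ k := by
            rw [div_pow, one_pow]; ring
          rw [h3, le_div_iff₀ (pow_pos two_pos k)]
          linarith [h2]
    have hvolZ : volume Z = 0 := by
      have hb : ∀ μ : ℝ, 0 < μ → volume Z ≤ ENNReal.ofReal (Cn * μ ^ θ) := by
        intro μ hμ
        refine le_trans (measure_mono ?_) (hIH c hcd (Finsupp.tail β) hcβ1 μ hμ)
        intro y hy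
        refine ⟨hy.1, ?_⟩
        rw [hy.2, abs_zero]
        exact hμ.le
      by_contra hne
      have hfinZ : volume Z ≠ ⊤ := by
        refine ne_top_of_le_ne_top ?_ (measure_mono (fun y hy => hy.1))
        exact ((isCompact_closedBall (0 : Fin n → ℝ) 1).measure_lt_top).ne
      set v := (volume Z).toReal with hv
      have hv0 : 0 < v := ENNReal.toReal_pos hne hfinZ
      set μ := (v / (2 * Cn)) ^ (θ⁻¹) with hμdef
      have hμ : 0 < μ := Real.rpow_pos_of_pos (by positivity) _
      have h2 := hb μ hμ
      have h3 : Cn * μ ^ θ = v / 2 := by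
        rw [hμdef, Real.rpow_inv_rpow (by positivity) hθ0.ne']
        field_simp
      rw [h3] at h2
      have h4 : volume Z = ENNReal.ofReal v := (ENNReal.ofReal_toReal hfinZ).symm
      rw [h4] at h2
      have h5 : v ≤ v / 2 := (ENNReal.ofReal_le_ofReal_iff (by positivity)).mp h2
      linarith
    have hpieceZ : volume (T ∩ univ ×ˢ Z) = 0 := by
      refine le_antisymm ?_ zero_le
      refine le_trans (slice_piece hTmeas hZmeas (fun y _ => hslice2 y)) ?_
      rw [hvolZ, mul_zero]
    have hr1eq : ((1/2:ℝ) ^ ((d:ℝ)⁻¹)) * 2 ^ θ = r₁ := by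
      rw [hr₁, one_div, Real.inv_rpow (by norm_num : (0:ℝ) ≤ 2),
        ← Real.rpow_neg (by norm_num : (0:ℝ) ≤ 2),
        ← Real.rpow_add (by norm_num : (0:ℝ) < 2)]
      ring_nf
    have hpieceA : ∀ k : ℕ, volume (T ∩ univ ×ˢ A k)
        ≤ ENNReal.ofReal ((G₁ * lam ^ θ) * r₁ ^ k) := by
      intro k
      have hμk : (0:ℝ) < 2 ^ k * lam := by positivity
      have hsl : ∀ y ∈ A k, volume {t : ℝ | (t, y) ∈ T}
          ≤ ENNReal.ofReal (((d:ℝ)+2) * (K * lam / (2 ^ k * lam)) ^ ((d:ℝ)⁻¹)) := by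
        intro y hy
        exact hsliceBound _ hμk y hy.1 hy.2.1
      have hWm : volume (A k) ≤ ENNReal.ofReal (Cn * (2 ^ (k+1) * lam) ^ θ) := by
        refine le_trans (measure_mono ?_)
          (hIH c hcd (Finsupp.tail β) hcβ1 (2 ^ (k+1) * lam) (by positivity))
        exact fun y hy => ⟨hy.1, hy.2.2⟩
      refine le_trans (le_trans (slice_piece hTmeas (hAmeas k) hsl)
        (mul_le_mul' le_rfl hWm)) ?_
      rw [← ENNReal.ofReal_mul (by positivity)]
      refine ENNReal.ofReal_le_ofReal (le_of_eq ?_)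
      have e1 : K * lam / (2 ^ k * lam) = K * (1/2:ℝ) ^ k := by
        field_simp
        rw [← mul_pow]; norm_num
      have e2 : (K * (1/2:ℝ) ^ k) ^ ((d:ℝ)⁻¹)
          = K ^ ((d:ℝ)⁻¹) * (((1/2:ℝ) ^ ((d:ℝ)⁻¹)) ^ k) := by
        rw [Real.mul_rpow hK0.le (by positivity), pow_rpow_comm _ (by norm_num)]
      have e3 : ((2:ℝ) ^ (k+1) * lam) ^ θ = (2 ^ θ * ((2:ℝ) ^ θ) ^ k) * lam ^ θ := by
        rw [Real.mul_rpow (by positivity) hlam.le, pow_rpow_comm _ (by norm_num), pow_succ]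
        ring
      rw [e1, e2, e3, ← hr1eq, hG₁]
      ring
    have hpieceB : ∀ k : ℕ, volume (T ∩ univ ×ˢ B k)
        ≤ ENNReal.ofReal ((2 * Cn * lam ^ θ) * r₂ ^ k) := by
      intro k
      have hWm : volume (B k) ≤ ENNReal.ofReal (Cn * ((1/2:ℝ) ^ k * lam) ^ θ) :=
        hIH c hcd (Finsupp.tail β) hcβ1 ((1/2:ℝ) ^ k * lam) (by positivity)
      refine le_trans (le_trans (slice_piece hTmeas (hBmeas k) (fun y _ => hslice2 y))
        (mul_le_mul' le_rfl hWm)) ?_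
      rw [← ENNReal.ofReal_mul (by norm_num)]
      refine ENNReal.ofReal_le_ofReal (le_of_eq ?_)
      rw [Real.mul_rpow (by positivity) hlam.le, pow_rpow_comm _ (by norm_num), hr₂]
      ring
    -- assemble
    have hTsplit : volume S ≤ volume (T ∩ univ ×ˢ Z)
        + (volume (⋃ k, T ∩ univ ×ˢ A k) + volume (⋃ k, T ∩ univ ×ˢ B k)) := by
      rw [hvolS]
      have hsub : T ⊆ (T ∩ univ ×ˢ Z)
          ∪ ((⋃ k, T ∩ univ ×ˢ A k) ∪ (⋃ k, T ∩ univ ×ˢ B k)) := by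
        intro p hp
        rcases hcover hp with h | h
        · exact Or.inl ⟨hp, h⟩
        rcases h with h | h
        · obtain ⟨k, hk⟩ := mem_iUnion.mp h
          exact Or.inr (Or.inl (mem_iUnion.mpr ⟨k, hp, hk⟩))
        · obtain ⟨k, hk⟩ := mem_iUnion.mp h
          exact Or.inr (Or.inr (mem_iUnion.mpr ⟨k, hp, hk⟩))
      refine le_trans (measure_mono hsub) ?_
      refine le_trans (measure_union_le _ _) ?_
      exact add_le_add_right (measure_union_le _ _) _
    have hsumA : volume (⋃ k, T ∩ univ ×ˢ A k)
        ≤ ENNReal.ofReal ((G₁ * lam ^ θ) * (1 - r₁)⁻¹) := by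
      refine le_trans (measure_iUnion_le _) ?_
      refine le_trans (ENNReal.tsum_le_tsum hpieceA) ?_
      rw [tsum_ofReal_geom (by positivity) hr₁0 hr₁1]
    have hsumB : volume (⋃ k, T ∩ univ ×ˢ B k)
        ≤ ENNReal.ofReal ((2 * Cn * lam ^ θ) * (1 - r₂)⁻¹) := by
      refine le_trans (measure_iUnion_le _) ?_
      refine le_trans (ENNReal.tsum_le_tsum hpieceB) ?_
      rw [tsum_ofReal_geom (by positivity) hr₂0 hr₂1]
    calc volume S ≤ volume (T ∩ univ ×ˢ Z)
        + (volume (⋃ k, T ∩ univ ×ˢ A k) + volume (⋃ k, T ∩ univ ×ˢ B k)) := hTsplit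
      _ ≤ 0 + (ENNReal.ofReal ((G₁ * lam ^ θ) * (1 - r₁)⁻¹)
          + ENNReal.ofReal ((2 * Cn * lam ^ θ) * (1 - r₂)⁻¹)) := by
          rw [hpieceZ]
          exact add_le_add_right (add_le_add hsumA hsumB) _
      _ = ENNReal.ofReal (Cfin * lam ^ θ) := by
          rw [zero_add, ← ENNReal.ofReal_add (by positivity) (by positivity), hCfin]
          ring_nf

/-- Sublevel estimate for polynomials (Ricci–Stein): for `0 < ε < 1/d` there is a constant
`A` depending only on `ε`, `d`, `n` such that for every nonzero polynomial `P` of total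
degree at most `d`,
`∫_{|x| ≤ 1} |P(x)|^{-ε} dx ≤ A (∑_β |a_β|)^{-ε}`. -/
theorem polynomial_sublevel_estimate (n d : ℕ) (hn : 0 < n) (hd : 0 < d) (ε : ℝ)
    (hε0 : 0 < ε) (hε : ε < 1 / d) :
    ∃ A : ℝ, 0 < A ∧ ∀ P : MvPolynomial (Fin n) ℝ, P ≠ 0 → P.totalDegree ≤ d →
      (∫⁻ x in Metric.closedBall (0 : Fin n → ℝ) 1,
          ENNReal.ofReal (|MvPolynomial.eval x P| ^ (-ε))) ≤
        ENNReal.ofReal (A * (∑ β ∈ P.support, |P.coeff β|) ^ (-ε)) := by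
  have hdpos : (0:ℝ) < (d:ℝ) := Nat.cast_pos.mpr hd
  set θ : ℝ := (ε + 1 / d) / 2 with hθdef
  have hθ0 : 0 < θ := by positivity
  have hεθ : ε < θ := by
    rw [hθdef]; linarith
  have hθd : (d : ℝ) * θ < 1 := by
    rw [hθdef]
    have h1 : (d:ℝ) * (1/d) = 1 := by field_simp
    nlinarith
  obtain ⟨C, hC, hsub⟩ := sublevel_ball d hd θ hθ0 hθd n
  -- geometric data for the dyadic decomposition of the integral
  set q : ℝ := (2:ℝ) ^ ε with hq
  have hq0 : 0 < q := Real.rpow_pos_of_pos (by norm_num) _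
  set r₂ : ℝ := ((1:ℝ)/2) ^ θ with hr₂
  have hr₂0 : 0 ≤ r₂ := Real.rpow_nonneg (by norm_num) _
  set ρ : ℝ := q * r₂ with hρ
  have hρeq : ρ = (2:ℝ) ^ (ε - θ) := by
    rw [hρ, hq, hr₂, one_div, Real.inv_rpow (by norm_num : (0:ℝ) ≤ 2),
      ← Real.rpow_neg (by norm_num : (0:ℝ) ≤ 2),
      ← Real.rpow_add (by norm_num : (0:ℝ) < 2)]
    ring_nf
  have hρ0 : 0 ≤ ρ := by positivity
  have hρ1 : ρ < 1 := by
    rw [hρeq]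
    exact Real.rpow_lt_one_of_one_lt_of_neg one_lt_two (by linarith)
  have h1ρ : (0:ℝ) < 1 - ρ := by linarith
  set N : ℝ := ((d:ℝ) + 1) ^ n with hN
  have hN0 : (0:ℝ) < N := by positivity
  set A₀ : ℝ := 2 ^ n + q * C * (1 - ρ)⁻¹ with hA₀
  have hA₀0 : 0 < A₀ := by
    have : (0:ℝ) < (1 - ρ)⁻¹ := inv_pos.mpr h1ρ
    positivity
  refine ⟨A₀ * N ^ ε, by positivity, ?_⟩
  intro P hP hPd
  set ball := Metric.closedBall (0 : Fin n → ℝ) 1 with hball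
  have hballMeas : MeasurableSet ball := Metric.isClosed_closedBall.measurableSet
  have hvolball : volume ball = ENNReal.ofReal (2 ^ n) := by
    rw [hball, closedBall_pi _ zero_le_one]
    rw [volume_pi_pi]
    have : ∀ i : Fin n, Metric.closedBall ((0 : Fin n → ℝ) i) 1 = Icc (-1 : ℝ) 1 := by
      intro i
      rw [Real.closedBall_eq_Icc]
      norm_num
    simp_rw [this, Real.volume_Icc]
    rw [Finset.prod_const, Finset.card_univ, Fintype.card_fin, ← ENNReal.ofReal_pow (by norm_num)]
    norm_num
  -- the normalization
  have hsupp : P.support.Nonempty := MvPolynomial.support_nonempty.mpr hP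
  obtain ⟨β₀, hβ₀s, hβ₀max⟩ := Finset.exists_max_image P.support
    (fun β => |MvPolynomial.coeff β P|) hsupp
  set m : ℝ := |MvPolynomial.coeff β₀ P| with hm
  have hm0 : 0 < m := abs_pos.mpr (MvPolynomial.mem_support_iff.mp hβ₀s)
  set Ssum : ℝ := ∑ β ∈ P.support, |MvPolynomial.coeff β P| with hSsum
  have hS0 : 0 < Ssum :=
    Finset.sum_pos' (fun _ _ => abs_nonneg _) ⟨β₀, hβ₀s, hm0⟩
  -- support cardinality bound
  have hcard : (P.support.card : ℝ) ≤ N := by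
    have hinj : ∀ β ∈ P.support, ∀ γ ∈ P.support,
        (fun (β : Fin n →₀ ℕ) => (fun i => β i) : (Fin n →₀ ℕ) → (Fin n → ℕ)) β =
        (fun (β : Fin n →₀ ℕ) => (fun i => β i)) γ → β = γ := by
      intro β _ γ _ h
      ext i
      exact congrFun h i
    have hmapsto : ∀ β ∈ P.support, ∀ i, β i ≤ d := by
      intro β hβ i
      have h1 : β i ≤ β.sum fun _ e => e := by
        rw [Finsupp.sum]
        by_cases h : i ∈ β.support
        · exact Finset.single_le_sum (f := fun j => β j) (fun _ _ => Nat.zero_le _) h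
        · rw [Finsupp.notMem_support_iff.mp h]
          exact Nat.zero_le _
      exact le_trans h1 (le_trans (MvPolynomial.le_totalDegree hβ) hPd)
    have hcard1 : P.support.card ≤ (d+1) ^ n := by
      classical
      have := Finset.card_le_card_of_injOn
        (f := fun (β : Fin n →₀ ℕ) => (fun i => (⟨min (β i) d, by omega⟩ : Fin (d+1))))
        (s := P.support) (t := Finset.univ)
        (fun _ _ => Finset.mem_univ _)
        (by
          intro β hβ γ hγ h
          ext i
          have h1 := congrFun h i
          have h2 : min (β i) d = min (γ i) d := congrArg Fin.val h1
          rw [min_eq_left (hmapsto β hβ i), min_eq_left (hmapsto γ hγ i)] at h2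
          exact h2)
      rwa [Finset.card_univ, Fintype.card_fun, Fintype.card_fin, Fintype.card_fin] at this
    calc (P.support.card : ℝ) ≤ ((d+1 : ℕ) : ℝ) ^ n := by exact_mod_cast hcard1
      _ = N := by rw [hN]; norm_num
  have hSm : Ssum ≤ N * m := by
    calc Ssum ≤ ∑ _β ∈ P.support, m := Finset.sum_le_sum hβ₀max
      _ = (P.support.card : ℝ) * m := by rw [Finset.sum_const, nsmul_eq_mul]
      _ ≤ N * m := mul_le_mul_of_nonneg_right hcard hm0.le
  -- normalized sublevel estimate
  have hsublevel : ∀ μ : ℝ, 0 < μ →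
      volume {x ∈ ball | |MvPolynomial.eval x P| ≤ μ}
        ≤ ENNReal.ofReal (C * (μ / m) ^ θ) := by
    intro μ hμ
    set P' := m⁻¹ • P with hP'
    have hdeg' : P'.totalDegree ≤ d :=
      le_trans (MvPolynomial.totalDegree_smul_le _ _) hPd
    have hco' : 1 ≤ |MvPolynomial.coeff β₀ P'| := by
      rw [hP', MvPolynomial.coeff_smul, smul_eq_mul, abs_mul, abs_inv, ← hm,
        abs_of_pos hm0, inv_mul_cancel₀ hm0.ne']
    have hseteq : {x ∈ ball | |MvPolynomial.eval x P| ≤ μ}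
        = {x ∈ ball | |MvPolynomial.eval x P'| ≤ μ / m} := by
      ext x
      simp only [mem_sep_iff, and_congr_right_iff]
      intro _
      rw [hP', MvPolynomial.smul_eval, abs_mul, abs_inv,
        abs_of_pos hm0, div_eq_inv_mul]
      exact (mul_le_mul_iff_right₀ (inv_pos.mpr hm0)).symm
    rw [hseteq]
    exact hsub P' hdeg' β₀ hco' (μ / m) (by positivity)
  -- the dyadic decomposition of the domain
  set g : (Fin n → ℝ) → ℝ := fun x => |MvPolynomial.eval x P| with hg
  have hgc : Continuous g := (MvPolynomial.continuous_eval (p := P)).abs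
  set f : (Fin n → ℝ) → ℝ≥0∞ := fun x => ENNReal.ofReal (g x ^ (-ε)) with hf
  set U : Set (Fin n → ℝ) := ball ∩ g ⁻¹' (Ici m) with hU
  set V : ℕ → Set (Fin n → ℝ) := fun k =>
    ball ∩ g ⁻¹' (Ioc ((1/2:ℝ) ^ (k+1) * m) ((1/2:ℝ) ^ k * m)) with hV
  set Z₀ : Set (Fin n → ℝ) := g ⁻¹' {0} with hZ₀
  have hUmeas : MeasurableSet U := hballMeas.inter (hgc.measurable measurableSet_Ici)
  have hVmeas : ∀ k, MeasurableSet (V k) :=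
    fun k => hballMeas.inter (hgc.measurable measurableSet_Ioc)
  have hZ₀meas : MeasurableSet Z₀ := hgc.measurable (measurableSet_singleton 0)
  have hcover : ball ⊆ (U ∪ (⋃ k, V k)) ∪ Z₀ := by
    intro x hx
    rcases eq_or_lt_of_le (abs_nonneg (MvPolynomial.eval x P)) with h0 | h0
    · exact Or.inr h0.symm
    rcases le_or_gt m (g x) with hge | hlt
    · exact Or.inl (Or.inl ⟨hx, hge⟩)
    · have h1 : 1 ≤ m / g x := (one_le_div h0).mpr hlt.le
      obtain ⟨k, hk1, hk2⟩ := exists_nat_pow_near h1 one_lt_two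
      refine Or.inl (Or.inr (mem_iUnion.mpr ⟨k, hx, ?_, ?_⟩))
      · have h2 : m < 2 ^ (k+1) * g x := by
          rw [div_lt_iff₀ h0] at hk2
          linarith
        have h3 : (1/2:ℝ) ^ (k+1) * m = m / 2 ^ (k+1) := by
          rw [div_pow, one_pow]; ring
        rw [h3, div_lt_iff₀ (pow_pos two_pos _)]
        linarith
      · have h2 : (2:ℝ) ^ k * g x ≤ m := (le_div_iff₀ h0).mp hk1
        have h3 : (1/2:ℝ) ^ k * m = m / 2 ^ k := by
          rw [div_pow, one_pow]; ring
        rw [h3, le_div_iff₀ (pow_pos two_pos _)]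
        linarith
  -- integral bounds on the pieces
  have hintU : ∫⁻ x in U, f x ≤ ENNReal.ofReal (2 ^ n * m ^ (-ε)) := by
    have h1 : ∀ x ∈ U, f x ≤ ENNReal.ofReal (m ^ (-ε)) := by
      intro x hx
      exact ENNReal.ofReal_le_ofReal
        (Real.rpow_le_rpow_of_nonpos hm0 hx.2 (by linarith))
    calc ∫⁻ x in U, f x ≤ ∫⁻ _x in U, ENNReal.ofReal (m ^ (-ε)) :=
          setLIntegral_mono' hUmeas h1
      _ = ENNReal.ofReal (m ^ (-ε)) * volume U := setLIntegral_const _ _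
      _ ≤ ENNReal.ofReal (m ^ (-ε)) * ENNReal.ofReal (2 ^ n) := by
          refine mul_le_mul' le_rfl ?_
          rw [← hvolball]
          exact measure_mono inter_subset_left
      _ = ENNReal.ofReal (2 ^ n * m ^ (-ε)) := by
          rw [← ENNReal.ofReal_mul (Real.rpow_nonneg hm0.le _), mul_comm]
  have hintV : ∀ k : ℕ, ∫⁻ x in V k, f x
      ≤ ENNReal.ofReal ((q * C * m ^ (-ε)) * ρ ^ k) := by
    intro k
    have hμk : (0:ℝ) < (1/2:ℝ) ^ (k+1) * m := by positivity
    have h1 : ∀ x ∈ V k, f x ≤ ENNReal.ofReal (((1/2:ℝ) ^ (k+1) * m) ^ (-ε)) := by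
      intro x hx
      exact ENNReal.ofReal_le_ofReal
        (Real.rpow_le_rpow_of_nonpos hμk hx.2.1.le (by linarith))
    have h2 : volume (V k) ≤ ENNReal.ofReal (C * ((1/2:ℝ) ^ k) ^ θ) := by
      have h3 : V k ⊆ {x ∈ ball | |MvPolynomial.eval x P| ≤ (1/2:ℝ) ^ k * m} :=
        fun x hx => ⟨hx.1, hx.2.2⟩
      refine le_trans (measure_mono h3) ?_
      have h4 := hsublevel ((1/2:ℝ) ^ k * m) (by positivity)
      have h5 : ((1/2:ℝ) ^ k * m) / m = (1/2:ℝ) ^ k := by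
        field_simp
      rwa [h5] at h4
    calc ∫⁻ x in V k, f x
        ≤ ∫⁻ _x in V k, ENNReal.ofReal (((1/2:ℝ) ^ (k+1) * m) ^ (-ε)) :=
          setLIntegral_mono' (hVmeas k) h1
      _ = ENNReal.ofReal (((1/2:ℝ) ^ (k+1) * m) ^ (-ε)) * volume (V k) :=
          setLIntegral_const _ _
      _ ≤ ENNReal.ofReal (((1/2:ℝ) ^ (k+1) * m) ^ (-ε))
          * ENNReal.ofReal (C * ((1/2:ℝ) ^ k) ^ θ) := mul_le_mul' le_rfl h2
      _ = ENNReal.ofReal ((((1/2:ℝ) ^ (k+1) * m) ^ (-ε)) * (C * ((1/2:ℝ) ^ k) ^ θ)) :=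
          (ENNReal.ofReal_mul (Real.rpow_nonneg (by positivity) _)).symm
      _ = ENNReal.ofReal ((q * C * m ^ (-ε)) * ρ ^ k) := by
          congr 1
          have e1 : (((1/2:ℝ) ^ (k+1)) * m) ^ (-ε)
              = (((1/2:ℝ) ^ (-ε)) ^ (k+1)) * m ^ (-ε) := by
            rw [Real.mul_rpow (by positivity) hm0.le, pow_rpow_comm _ (by norm_num)]
          have e2 : ((1/2:ℝ) ^ k) ^ θ = (((1/2:ℝ) ^ θ) ^ k) := by
            rw [pow_rpow_comm _ (by norm_num)]
          have e3 : ((1/2:ℝ) ^ (-ε)) = q := by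
            rw [hq, one_div, Real.inv_rpow (by norm_num : (0:ℝ) ≤ 2),
              ← Real.rpow_neg (by norm_num : (0:ℝ) ≤ 2), neg_neg]
          rw [e1, e2, e3, hρ, hr₂, pow_succ]
          ring
  have hintZ : ∫⁻ x in Z₀, f x = 0 := by
    have h1 : ∀ᵐ x ∂volume, x ∈ Z₀ → f x = 0 := by
      refine ae_of_all _ ?_
      intro x hx
      have h2 : g x = 0 := hx
      rw [hf]
      simp only [h2]
      rw [Real.zero_rpow (by intro h; exact hε0.ne' (by linarith [neg_eq_zero.mp h]))]
      simp
    rw [setLIntegral_congr_fun_ae hZ₀meas h1]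
    simp
  -- assemble
  have hsplit : ∫⁻ x in ball, f x
      ≤ ((∫⁻ x in U, f x) + ∫⁻ x in (⋃ k, V k), f x) + ∫⁻ x in Z₀, f x := by
    have h1 : volume.restrict ball ≤
        (volume.restrict U + volume.restrict (⋃ k, V k)) + volume.restrict Z₀ := by
      refine le_trans (Measure.restrict_mono hcover le_rfl) ?_
      refine le_trans (Measure.restrict_union_le _ _) ?_
      exact add_le_add_left (Measure.restrict_union_le _ _) _
    calc ∫⁻ x in ball, f x ≤ ∫⁻ x, f x
          ∂((volume.restrict U + volume.restrict (⋃ k, V k)) + volume.restrict Z₀) :=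
          lintegral_mono' h1 le_rfl
      _ = ((∫⁻ x in U, f x) + ∫⁻ x in (⋃ k, V k), f x) + ∫⁻ x in Z₀, f x := by
          rw [lintegral_add_measure, lintegral_add_measure]
  have hsumV : ∫⁻ x in (⋃ k, V k), f x
      ≤ ENNReal.ofReal ((q * C * m ^ (-ε)) * (1 - ρ)⁻¹) := by
    refine le_trans (lintegral_iUnion_le _ _) ?_
    refine le_trans (ENNReal.tsum_le_tsum hintV) ?_
    rw [tsum_ofReal_geom (by positivity) hρ0 hρ1]
  have hmain : ∫⁻ x in ball, f x ≤ ENNReal.ofReal (A₀ * m ^ (-ε)) := by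
    refine le_trans hsplit ?_
    rw [hintZ, add_zero]
    refine le_trans (add_le_add hintU hsumV) ?_
    rw [← ENNReal.ofReal_add (by positivity) (by positivity)]
    refine ENNReal.ofReal_le_ofReal (le_of_eq ?_)
    rw [hA₀]
    ring
  refine le_trans hmain ?_
  refine ENNReal.ofReal_le_ofReal ?_
  have hmS : Ssum / N ≤ m := by
    rw [div_le_iff₀ hN0]
    linarith [hSm]
  have h1 : m ^ (-ε) ≤ (Ssum / N) ^ (-ε) :=
    Real.rpow_le_rpow_of_nonpos (by positivity) hmS (by linarith)
  have h2 : (Ssum / N) ^ (-ε) = Ssum ^ (-ε) * N ^ ε := by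
    rw [Real.div_rpow hS0.le hN0.le, Real.rpow_neg hN0.le, div_eq_mul_inv, inv_inv]
  calc A₀ * m ^ (-ε) ≤ A₀ * (Ssum ^ (-ε) * N ^ ε) := by
        rw [← h2]
        exact mul_le_mul_of_nonneg_left h1 hA₀0.le
    _ = A₀ * N ^ ε * Ssum ^ (-ε) := by ring
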